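/- Every Mersenne prime p = 2^n − 1 is (2,2)-constructible in O(log n) = O(log log p) steps: there is an absolute constant C such that for all n ≥ 2, the number 2^n − 1 is (2,2)-constructible in at most C log_2 n steps. -/
import Mathlib


/-- The ℓ1-norm of a multivariate integer polynomial. -/
noncomputable def l1Norm {n : ℕ} (f : MvPolynomial (Fin n) ℤ) : ℕ :=
  ∑ m ∈ f.support, (f.coeff m).natAbs

/-- A natural number `r` is `(k,t)`-constructible in at most `n` steps if there is a
sequence of naturals `0 = a 0, a 1, …, a m = r` with `m ≤ n` such that each `a i`
(`1 ≤ i ≤ m`) is the value at `(a 0, …, a (i-1))` of an integer polynomial of degree at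
most `t` and ℓ1-norm at most `k`. -/
def Constructible (k t n r : ℕ) : Prop :=
  ∃ m ≤ n, ∃ a : ℕ → ℕ, a 0 = 0 ∧ a m = r ∧
    ∀ i, 1 ≤ i → i ≤ m →
      ∃ f : MvPolynomial (Fin i) ℤ, f.totalDegree ≤ t ∧ l1Norm f ≤ k ∧
        MvPolynomial.aeval (fun j : Fin i => (a j : ℤ)) f = (a i : ℤ)

open MvPolynomial

lemma l1Norm_monomial {n : ℕ} (s : (Fin n) →₀ ℕ) (c : ℤ) :
    l1Norm (monomial s c) = c.natAbs := by
  classical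
  unfold l1Norm
  rcases eq_or_ne c 0 with h | h
  · simp [h]
  · rw [support_monomial, if_neg h, Finset.sum_singleton, coeff_monomial, if_pos rfl]

lemma l1Norm_add_le {n : ℕ} (f g : MvPolynomial (Fin n) ℤ) :
    l1Norm (f + g) ≤ l1Norm f + l1Norm g := by
  classical
  unfold l1Norm
  calc ∑ m ∈ (f + g).support, ((f + g).coeff m).natAbs
      ≤ ∑ m ∈ f.support ∪ g.support, ((f + g).coeff m).natAbs := by
        apply Finset.sum_le_sum_of_subset (MvPolynomial.support_add)
    _ ≤ ∑ m ∈ f.support ∪ g.support, ((f.coeff m).natAbs + (g.coeff m).natAbs) := by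
        apply Finset.sum_le_sum
        intro m _
        simpa using Int.natAbs_add_le (f.coeff m) (g.coeff m)
    _ = (∑ m ∈ f.support ∪ g.support, (f.coeff m).natAbs)
        + ∑ m ∈ f.support ∪ g.support, (g.coeff m).natAbs := Finset.sum_add_distrib
    _ = _ := by
        rw [← Finset.sum_subset (Finset.subset_union_left (s₂ := g.support))
            (fun m _ hm => by simp [MvPolynomial.notMem_support_iff.mp hm]),
          ← Finset.sum_subset (Finset.subset_union_right (s₁ := f.support))
            (fun m _ hm => by simp [MvPolynomial.notMem_support_iff.mp hm])]

/-- Auxiliary: reachability with a fixed chain containing 2 at position 2. -/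
def Reach (m v : ℕ) : Prop :=
  ∃ a : ℕ → ℕ, a 0 = 0 ∧ a 2 = 2 ∧ a m = v ∧
    ∀ i, 1 ≤ i → i ≤ m →
      ∃ f : MvPolynomial (Fin i) ℤ, f.totalDegree ≤ 2 ∧ l1Norm f ≤ 2 ∧
        MvPolynomial.aeval (fun j : Fin i => (a j : ℤ)) f = (a i : ℤ)

lemma reach_step {m v : ℕ} (w : ℕ) (hm : 2 ≤ m) (h : Reach m v)
    (H : ∀ a : ℕ → ℕ, a 2 = 2 → a m = v →
      ∃ f : MvPolynomial (Fin (m+1)) ℤ, f.totalDegree ≤ 2 ∧ l1Norm f ≤ 2 ∧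
        MvPolynomial.aeval (fun j : Fin (m+1) => (a j : ℤ)) f = (w : ℤ)) :
    Reach (m+1) w := by
  obtain ⟨a, h0, h2, hmv, hok⟩ := h
  set a' : ℕ → ℕ := Function.update a (m+1) w with ha'
  have hne : ∀ j : ℕ, j ≤ m → a' j = a j := by
    intro j hj
    exact Function.update_of_ne (by omega) _ _
  have h2' : a' 2 = 2 := by rw [hne 2 hm]; exact h2
  have hmv' : a' m = v := by rw [hne m le_rfl]; exact hmv
  refine ⟨a', by rw [hne 0 (by omega)]; exact h0, h2', ?_, ?_⟩
  · simp [ha', Function.update_self]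
  · intro i h1 hi
    rcases Nat.lt_or_ge i (m+1) with hlt | hge
    · obtain ⟨f, hd, hl, he⟩ := hok i h1 (by omega)
      refine ⟨f, hd, hl, ?_⟩
      have hfun : (fun j : Fin i => (a' j : ℤ)) = fun j : Fin i => (a j : ℤ) := by
        funext j
        rw [hne j (by have := j.2; omega)]
      rw [hfun, he, hne i (by omega)]
    · have hieq : i = m + 1 := by omega
      subst hieq
      obtain ⟨f, hd, hl, he⟩ := H a' h2' hmv'
      refine ⟨f, hd, hl, ?_⟩
      rw [he]
      simp [ha', Function.update_self]

lemma reach_base : Reach 2 2 := by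
  refine ⟨fun i => i, rfl, rfl, rfl, ?_⟩
  intro i h1 h2
  interval_cases i
  · refine ⟨monomial 0 1, ?_, ?_, ?_⟩
    · simp [totalDegree_monomial]
    · rw [l1Norm_monomial]; norm_num
    · simp [aeval_monomial]
  · refine ⟨monomial (Finsupp.single (1 : Fin 2) 1) 2, ?_, ?_, ?_⟩
    · rw [totalDegree_monomial _ (by norm_num)]
      simp
    · simp [l1Norm_monomial]
    · simp [aeval_monomial]

lemma reach_sq {m v : ℕ} (hm : 2 ≤ m) (h : Reach m v) : Reach (m+1) (v * v) := by
  refine reach_step _ hm h ?_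
  intro a _ hmv
  refine ⟨monomial (Finsupp.single (⟨m, Nat.lt_succ_self m⟩ : Fin (m+1)) 2) 1, ?_, ?_, ?_⟩
  · rw [totalDegree_monomial _ (by norm_num)]
    simp
  · simp [l1Norm_monomial]
  · simp [aeval_monomial, hmv]
    ring

lemma reach_double {m v : ℕ} (hm : 2 ≤ m) (h : Reach m v) : Reach (m+1) (2 * v) := by
  refine reach_step _ hm h ?_
  intro a _ hmv
  refine ⟨monomial (Finsupp.single (⟨m, Nat.lt_succ_self m⟩ : Fin (m+1)) 1) 2, ?_, ?_, ?_⟩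
  · rw [totalDegree_monomial _ (by norm_num)]
    simp
  · simp [l1Norm_monomial]
  · simp [aeval_monomial, hmv]

lemma reach_sub_one {m v : ℕ} (hm : 2 ≤ m) (hv : 1 ≤ v) (h : Reach m v) :
    Reach (m+1) (v - 1) := by
  refine reach_step _ hm h ?_
  intro a _ hmv
  refine ⟨monomial (Finsupp.single (⟨m, Nat.lt_succ_self m⟩ : Fin (m+1)) 1) 1
      + monomial 0 (-1), ?_, ?_, ?_⟩
  · apply le_trans (totalDegree_add _ _)
    apply max_le
    · apply le_trans (totalDegree_monomial_le _ _)
      simp [Finsupp.sum_single_index]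
    · apply le_trans (totalDegree_monomial_le _ _)
      simp
  · apply le_trans (l1Norm_add_le _ _)
    rw [l1Norm_monomial, l1Norm_monomial]
    norm_num
  · rw [map_add]
    simp [aeval_monomial, hmv]
    rw [Nat.cast_sub hv]
    push_cast
    ring

lemma reach_pow (n : ℕ) (hn : 1 ≤ n) :
    ∃ m, 2 ≤ m ∧ m ≤ 2 * Nat.log 2 n + 2 ∧ Reach m (2 ^ n) := by
  induction n using Nat.strong_induction_on with
  | _ n ih =>
  rcases eq_or_lt_of_le hn with h1 | h2
  · refine ⟨2, le_rfl, by simp, ?_⟩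
    rw [← h1]
    simpa using reach_base
  · have hn2 : 2 ≤ n := h2
    set k := n / 2 with hk
    have hk1 : 1 ≤ k := (Nat.one_le_div_iff (by omega)).mpr hn2
    have hkn : k < n := Nat.div_lt_self (by omega) (by omega)
    obtain ⟨m, hm2, hmb, hr⟩ := ih k hkn hk1
    have hlogpos : 1 ≤ Nat.log 2 n := Nat.log_pos (by omega) hn2
    have hlog : Nat.log 2 n = Nat.log 2 k + 1 := by
      have := Nat.log_div_base 2 n
      rw [← hk] at this
      omega
    have hmod := Nat.div_add_mod n 2
    rcases Nat.even_or_odd n with he | ho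
    · have hne : n = 2 * k := by
        obtain ⟨t, ht⟩ := he
        omega
      refine ⟨m + 1, by omega, by omega, ?_⟩
      have : 2 ^ k * 2 ^ k = 2 ^ n := by
        rw [← pow_add, hne]; ring_nf
      rw [← this]
      exact reach_sq hm2 hr
    · have hno : n = 2 * k + 1 := by
        obtain ⟨t, ht⟩ := ho
        omega
      refine ⟨m + 2, by omega, by omega, ?_⟩
      have : 2 * (2 ^ k * 2 ^ k) = 2 ^ n := by
        rw [← pow_add, hno]; ring_nf
      rw [← this]
      exact reach_double (by omega) (reach_sq hm2 hr)

/-- There is an absolute constant `C` such that for every `n ≥ 2` the Mersenne number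
`2^n − 1` is `(2,2)`-constructible in at most `C log₂ n` steps. -/
theorem mersenne_constructible :
    ∃ C : ℝ, ∀ n : ℕ, 2 ≤ n →
      ∃ m : ℕ, (m : ℝ) ≤ C * Real.logb 2 n ∧ Constructible 2 2 m (2 ^ n - 1) := by
  refine ⟨5, ?_⟩
  intro n hn
  obtain ⟨m, hm2, hmb, hr⟩ := reach_pow n (by omega)
  have hr' : Reach (m + 1) (2 ^ n - 1) :=
    reach_sub_one hm2 (Nat.one_le_two_pow) hr
  refine ⟨m + 1, ?_, ?_⟩
  · have hL1 : (1 : ℝ) ≤ Real.logb 2 n := by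
      have : Real.logb 2 2 ≤ Real.logb 2 n :=
        Real.logb_le_logb_of_le (by norm_num) (by norm_num)
          (by exact_mod_cast hn)
      rwa [Real.logb_self_eq_one (by norm_num)] at this
    have hL2 : (Nat.log 2 n : ℝ) ≤ Real.logb 2 n := Real.natLog_le_logb n 2
    have hcast : ((m + 1 : ℕ) : ℝ) ≤ 2 * (Nat.log 2 n : ℝ) + 3 := by
      push_cast
      have : (m : ℝ) ≤ 2 * (Nat.log 2 n : ℝ) + 2 := by exact_mod_cast hmb
      linarith
    calc ((m + 1 : ℕ) : ℝ) ≤ 2 * (Nat.log 2 n : ℝ) + 3 := hcast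
      _ ≤ 2 * Real.logb 2 n + 3 * Real.logb 2 n := by nlinarith
      _ = 5 * Real.logb 2 n := by ring
  · obtain ⟨a, h0, _, hmv, hok⟩ := hr'
    exact ⟨m + 1, le_rfl, a, h0, hmv, hok⟩
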